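/- Let μ be a probability measure on a measurable space α, g : α → ℝ measurable, f_B : ℝ → [0,∞) a measurable probability density with M := sup f_B satisfying 0 < M < ∞, and fix t ∈ ℝ with f_T(t) := ∫_α f_B(t − g(a)) dμ(a) > 0. Let A have law μ and let U be uniform on [0,1] independent of A. Then for every measurable S ⊆ α, P( A ∈ S | U < f_B(t − g(A))/M ) = ( ∫_S f_B(t − g(a)) dμ(a) ) / f_T(t). That is, the law of A conditioned on acceptance has Radon–Nikodym density a ↦ f_B(t − g(a))/f_T(t) with respect to μ. -/

import Mathlib

open MeasureTheory ProbabilityTheory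
open scoped ENNReal

/-- Correctness of the continuous PDC deterministic-second-half algorithm for
the statistic `T = g(A) + B`, where `B` has bounded Lebesgue density `f_B` with
`M = sup f_B`, `0 < M < ∞`: accepting `a ~ μ` when an independent uniform `U`
on `[0,1]` satisfies `U < f_B(t - g(a))/M` produces the law on `α` with density
`a ↦ f_B(t - g(a)) / f_T(t)` with respect to `μ`, where
`f_T(t) = ∫ f_B(t - g(a)) dμ(a) > 0`. -/
theorem pdc_dsh_continuous_correct {α : Type*} [MeasurableSpace α]
    (μ : Measure α) [IsProbabilityMeasure μ]
    (g : α → ℝ) (hg : Measurable g)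
    (fB : ℝ → ℝ) (hfB : Measurable fB) (hfB0 : ∀ b, 0 ≤ fB b)
    (hdens : ∫⁻ b, ENNReal.ofReal (fB b) = 1)
    (M : ℝ) (hbdd : BddAbove (Set.range fB)) (hM : M = ⨆ b, fB b) (hM0 : 0 < M)
    (t : ℝ) (hft : 0 < ∫ a, fB (t - g a) ∂μ)
    (π : Measure (α × ℝ))
    (hπ : π = μ.prod ((volume : Measure ℝ).restrict (Set.Icc 0 1))) :
    ∀ S : Set α, MeasurableSet S →
      (π[|{ω : α × ℝ | ω.2 < fB (t - g ω.1) / M}]) (S ×ˢ Set.univ) =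
        ENNReal.ofReal ((∫ a in S, fB (t - g a) ∂μ) / ∫ a, fB (t - g a) ∂μ) := by
  classical
  intro S hS
  set F : α → ℝ := fun a => fB (t - g a) with hFdef
  have hFmeas : Measurable F := hfB.comp (measurable_const.sub hg)
  have hF0 : ∀ a, 0 ≤ F a := fun a => hfB0 _
  have hFM : ∀ a, F a ≤ M := fun a => hM ▸ le_ciSup hbdd _
  have hE : MeasurableSet {ω : α × ℝ | ω.2 < fB (t - g ω.1) / M} :=
    measurableSet_lt measurable_snd ((hFmeas.comp measurable_fst).div_const M)
  -- slice
  have hslice : ∀ a : α, (volume.restrict (Set.Icc (0:ℝ) 1)) (Set.Iio (F a / M))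
      = ENNReal.ofReal (F a / M) := by
    intro a
    have h0 : 0 ≤ F a / M := div_nonneg (hF0 a) hM0.le
    have h1 : F a / M ≤ 1 := (div_le_one hM0).mpr (hFM a)
    rw [Measure.restrict_apply measurableSet_Iio]
    have heq : Set.Iio (F a / M) ∩ Set.Icc 0 1 = Set.Ico 0 (F a / M) := by
      ext u
      simp only [Set.mem_inter_iff, Set.mem_Iio, Set.mem_Icc, Set.mem_Ico]
      constructor
      · rintro ⟨h, h2, h3⟩; exact ⟨h2, h⟩
      · rintro ⟨h2, h⟩; exact ⟨h, h2, by linarith⟩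
    rw [heq, Real.volume_Ico]
    simp
  have hInt : Integrable F μ := by
    refine (integrable_const M).mono' hFmeas.aestronglyMeasurable ?_
    filter_upwards with a
    rw [Real.norm_eq_abs, abs_of_nonneg (hF0 a)]
    exact hFM a
  have hIntDiv : Integrable (fun a => F a / M) μ := hInt.div_const M
  -- π E
  have hπE : π {ω : α × ℝ | ω.2 < fB (t - g ω.1) / M}
      = ENNReal.ofReal ((∫ a, F a ∂μ) / M) := by
    rw [hπ, Measure.prod_apply hE]
    have : ∀ a, (Prod.mk a ⁻¹' {ω : α × ℝ | ω.2 < fB (t - g ω.1) / M})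
        = Set.Iio (F a / M) := fun a => rfl
    simp_rw [this, hslice]
    rw [← ofReal_integral_eq_lintegral_ofReal hIntDiv
      (ae_of_all _ fun a => div_nonneg (hF0 a) hM0.le)]
    rw [integral_div]
  have hπES : π ({ω : α × ℝ | ω.2 < fB (t - g ω.1) / M} ∩ S ×ˢ Set.univ)
      = ENNReal.ofReal ((∫ a in S, F a ∂μ) / M) := by
    rw [hπ, Measure.prod_apply (hE.inter (hS.prod MeasurableSet.univ))]
    have hsl : ∀ a, (Prod.mk a ⁻¹' ({ω : α × ℝ | ω.2 < fB (t - g ω.1) / M} ∩ S ×ˢ Set.univ))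
        = if a ∈ S then Set.Iio (F a / M) else ∅ := by
      intro a
      by_cases ha : a ∈ S <;> ext u <;> simp [ha, Set.mem_Iio, hFdef]
    calc ∫⁻ a, (volume.restrict (Set.Icc (0:ℝ) 1))
            (Prod.mk a ⁻¹' ({ω : α × ℝ | ω.2 < fB (t - g ω.1) / M} ∩ S ×ˢ Set.univ)) ∂μ
        = ∫⁻ a, S.indicator (fun a => ENNReal.ofReal (F a / M)) a ∂μ := by
          refine lintegral_congr fun a => ?_
          rw [hsl a]
          by_cases ha : a ∈ S <;> simp [ha, hslice a, Set.indicator]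
      _ = ∫⁻ a in S, ENNReal.ofReal (F a / M) ∂μ := lintegral_indicator hS _
      _ = ENNReal.ofReal ((∫ a in S, F a ∂μ) / M) := by
          rw [← ofReal_integral_eq_lintegral_ofReal (hIntDiv.restrict)
            (ae_of_all _ fun a => div_nonneg (hF0 a) hM0.le), integral_div]
  rw [cond_apply hE, hπE, hπES]
  have hI0 : 0 < (∫ a, F a ∂μ) / M := div_pos hft hM0
  have hIS0 : 0 ≤ (∫ a in S, F a ∂μ) :=
    integral_nonneg fun a => hF0 a
  rw [ENNReal.div_eq_inv_mul.symm, ← ENNReal.ofReal_div_of_pos hI0]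
  congr 1
  field_simp
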